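/- arXiv:2512.20035 — 3 statements merged into one kernel-verified Lean document; each statement's English description precedes it below -/
import Mathlib

section
/- Let Φ : ℝ³ → ℝ be a continuous compactly supported amplitude with Φ(0,0,0) ≠ 0, and for λ > 0 define the oscillatory integral operator T_λ f(u,v) = ∫_ℝ exp(i·λ·(u·t² + v²·t))·Φ(u,v,t)·f(t) dt. Then there exists a constant C_Φ > 0 such that for all λ ≥ 1, the operator norm of T_λ from L²(ℝ) to L²(ℝ²) satisfies ‖T_λ‖ ≥ C_Φ·λ^(-3/8). -/
open MeasureTheory

set_option maxHeartbeats 2000000 in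
theorem stmt_7 (Φ : ℝ × ℝ × ℝ → ℝ) (hΦcont : Continuous Φ)
    (hΦsupp : HasCompactSupport Φ) (hΦ0 : Φ (0, 0, 0) ≠ 0) :
    ∃ C > 0, ∀ lam : ℝ, 1 ≤ lam → ∃ f : ℝ → ℂ, MemLp f 2 (volume : Measure ℝ) ∧
      eLpNorm f 2 volume ≤ 1 ∧
      eLpNorm (fun p : ℝ × ℝ =>
          ∫ t : ℝ, Complex.exp (Complex.I * (lam * (p.1 * t ^ 2 + p.2 ^ 2 * t))) *
            (Φ (p.1, p.2, t) : ℂ) * f t) 2 volume ≥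
        ENNReal.ofReal (C * lam ^ (-(3:ℝ)/8)) := by
  classical
  set Φ0 := Φ (0, 0, 0) with hΦ0def
  have habs : 0 < |Φ0| := abs_pos.mpr hΦ0
  set M : ℝ := |Φ0| / 2 with hMdef
  have hM : 0 < M := by positivity
  obtain ⟨δ, hδpos, hδ⟩ : ∃ δ > 0, ∀ q : ℝ × ℝ × ℝ, dist q ((0:ℝ), (0:ℝ), (0:ℝ)) < δ →
      |Φ q - Φ0| < M := by
    obtain ⟨δ, hδ, h⟩ := Metric.continuousAt_iff.mp (hΦcont.continuousAt
      (x := ((0:ℝ), (0:ℝ), (0:ℝ)))) M hM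
    exact ⟨δ, hδ, fun q hq => by simpa [Real.dist_eq] using h hq⟩
  set s : ℝ := if 0 < Φ0 then 1 else -1 with hsdef
  have hs_abs : |s| = 1 := by
    rcases hΦ0.lt_or_gt with h0 | h0 <;> simp [hsdef, h0, not_lt.mpr h0.le]
  have hsΦ : ∀ q : ℝ × ℝ × ℝ, dist q ((0:ℝ), (0:ℝ), (0:ℝ)) < δ → M ≤ s * Φ q := by
    intro q hq
    have h1 := hδ q hq
    rw [abs_sub_lt_iff] at h1
    rcases hΦ0.lt_or_gt with h0 | h0
    · have hs : s = -1 := by simp [hsdef, not_lt.mpr h0.le]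
      have hΦ0eq : Φ0 = -(2 * M) := by rw [hMdef, abs_of_neg h0]; ring
      rw [hs]; have h2 := h1.1; linarith
    · have hs : s = 1 := by simp [hsdef, h0]
      have hΦ0eq : Φ0 = 2 * M := by rw [hMdef, abs_of_pos h0]; ring
      rw [hs]; have h2 := h1.2; linarith
  set b : ℝ := min (δ / 2) (1 / 2) with hbdef
  have hb : 0 < b := lt_min (by positivity) (by norm_num)
  have hbδ : b < δ := lt_of_le_of_lt (min_le_left _ _) (by linarith)
  have hb2 : b ≤ 1 / 2 := min_le_right _ _
  refine ⟨M / 2 * b ^ ((3:ℝ)/2), by positivity, ?_⟩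
  intro lam hlam
  have hlam0 : (0:ℝ) < lam := lt_of_lt_of_le one_pos hlam
  set x : ℝ := lam ^ (-(1:ℝ)/8) with hxdef
  have hx : 0 < x := Real.rpow_pos_of_pos hlam0 _
  have hx1 : x ≤ 1 := Real.rpow_le_one_of_one_le_of_nonpos hlam (by norm_num)
  have hx8 : lam * x ^ (8:ℕ) = 1 := by
    rw [hxdef, ← Real.rpow_natCast (lam ^ (-(1:ℝ)/8)) 8, ← Real.rpow_mul hlam0.le]
    norm_num
    rw [Real.rpow_neg_one]
    exact mul_inv_cancel₀ hlam0.ne'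
  have h38 : lam ^ (-(3:ℝ)/8) = x ^ (3:ℕ) := by
    rw [hxdef, ← Real.rpow_natCast (lam ^ (-(1:ℝ)/8)) 3, ← Real.rpow_mul hlam0.le]
    norm_num
  set y : ℝ := b ^ ((1:ℝ)/2) with hydef
  have hy : 0 < y := Real.rpow_pos_of_pos hb _
  have hy2 : y ^ (2:ℕ) = b := by
    rw [hydef, ← Real.rpow_natCast (b ^ ((1:ℝ)/2)) 2, ← Real.rpow_mul hb.le]
    norm_num
  have hy3 : b ^ ((3:ℝ)/2) = y ^ (3:ℕ) := by
    rw [hydef, ← Real.rpow_natCast (b ^ ((1:ℝ)/2)) 3, ← Real.rpow_mul hb.le]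
    norm_num
  set L : ℝ := b * x ^ (4:ℕ) with hLdef
  have hL : 0 < L := by positivity
  set a : ℝ := L ^ (-(1:ℝ)/2) with hadef
  have ha : 0 < a := Real.rpow_pos_of_pos hL _
  have haL : a * L = y * x ^ (2:ℕ) := by
    have hw : (0:ℝ) < y * x ^ (2:ℕ) := by positivity
    have h1 : L = (y * x ^ (2:ℕ)) ^ (2:ℕ) := by rw [hLdef, ← hy2]; ring
    have h2 : a = (y * x ^ (2:ℕ))⁻¹ := by
      rw [hadef, h1, ← Real.rpow_natCast (y * x ^ (2:ℕ)) 2, ← Real.rpow_mul hw.le]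
      norm_num [Real.rpow_neg_one]
    rw [h2, h1]; field_simp
  refine ⟨(Set.Ioc (0:ℝ) L).indicator (fun _ => (a:ℂ)), ?_, ?_, ?_⟩
  · exact memLp_indicator_const 2 measurableSet_Ioc _ (Or.inr (by simp [Real.volume_Ioc]))
  · rw [eLpNorm_indicator_const measurableSet_Ioc (by norm_num) (by norm_num)]
    have hvol : volume (Set.Ioc (0:ℝ) L) = ENNReal.ofReal L := by simp [Real.volume_Ioc]
    have hnn : ‖(a:ℂ)‖ₑ = ENNReal.ofReal a := by
      rw [← ofReal_norm, Complex.norm_real, Real.norm_of_nonneg ha.le]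
    have htp : 1 / (2:ENNReal).toReal = (1:ℝ)/2 := by norm_num
    have h1 : a * L ^ ((1:ℝ)/2) = 1 := by
      rw [hadef, ← Real.rpow_add hL]; norm_num
    rw [hvol, hnn, htp, ENNReal.ofReal_rpow_of_pos hL, ← ENNReal.ofReal_mul ha.le, h1]
    simp
  · set V : ℝ := b * x ^ (2:ℕ) with hVdef
    have hV : 0 < V := by positivity
    set R : Set (ℝ × ℝ) := Set.Ioc 0 b ×ˢ Set.Ioc 0 V with hRdef
    set m : ℝ := M / 2 * (a * L) with hmdef
    have hm : 0 < m := by positivity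
    have hkey : ∀ u v : ℝ, (u, v) ∈ R →
        m ≤ ‖∫ t : ℝ, Complex.exp (Complex.I * (↑lam * ((u:ℂ) * (t:ℂ) ^ 2 + (v:ℂ) ^ 2 * (t:ℂ)))) *
            (Φ (u, v, t) : ℂ) * (Set.Ioc (0:ℝ) L).indicator (fun _ => (a:ℂ)) t‖ := by
      intro u v hp
      obtain ⟨hu, hv⟩ := hp
      simp only [Set.mem_Ioc] at hu hv
      set θ : ℝ → ℝ := fun t => lam * (u * t ^ 2 + v ^ 2 * t) with hθdef
      set F : ℝ → ℂ := fun t => Complex.exp (Complex.I *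
          (↑lam * ((u:ℂ) * (t:ℂ) ^ 2 + (v:ℂ) ^ 2 * (t:ℂ)))) * (Φ (u, v, t) : ℂ) * (a:ℂ)
        with hFdef
      have hFcont : Continuous F := by
        apply Continuous.mul (Continuous.mul ?_ ?_) continuous_const
        · exact Complex.continuous_exp.comp (by fun_prop)
        · exact Complex.continuous_ofReal.comp (hΦcont.comp (by fun_prop))
      have hrw : (fun t : ℝ => Complex.exp (Complex.I *
            (↑lam * ((u:ℂ) * (t:ℂ) ^ 2 + (v:ℂ) ^ 2 * (t:ℂ)))) * (Φ (u, v, t) : ℂ) *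
            (Set.Ioc (0:ℝ) L).indicator (fun _ => (a:ℂ)) t)
          = (Set.Ioc (0:ℝ) L).indicator F := by
        funext t
        by_cases ht : t ∈ Set.Ioc (0:ℝ) L <;>
          simp [hFdef, Set.indicator_of_mem, Set.indicator_of_notMem, ht]
      rw [hrw, integral_indicator measurableSet_Ioc]
      have hFint : IntegrableOn F (Set.Ioc 0 L) volume := hFcont.integrableOn_Ioc
      have hre : ∀ t ∈ Set.Ioc (0:ℝ) L, M / 2 * a ≤ ((s:ℂ) * F t).re := by
        intro t ht
        obtain ⟨ht0, htL⟩ := ht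
        have hx2 : x ^ (2:ℕ) ≤ 1 := pow_le_one₀ hx.le hx1
        have hx4 : x ^ (4:ℕ) ≤ 1 := pow_le_one₀ hx.le hx1
        have hVb : V ≤ b := by
          calc V = b * x ^ (2:ℕ) := hVdef
            _ ≤ b * 1 := mul_le_mul_of_nonneg_left hx2 hb.le
            _ = b := mul_one b
        have hLb : L ≤ b := by
          calc L = b * x ^ (4:ℕ) := hLdef
            _ ≤ b * 1 := mul_le_mul_of_nonneg_left hx4 hb.le
            _ = b := mul_one b
        have hdist : dist ((u, v, t) : ℝ × ℝ × ℝ) ((0:ℝ), (0:ℝ), (0:ℝ)) < δ := by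
          simp only [Prod.dist_eq, Real.dist_eq, sub_zero]
          rw [abs_of_pos hu.1, abs_of_pos hv.1, abs_of_pos ht0]
          exact max_lt (lt_of_le_of_lt hu.2 hbδ)
            (max_lt (by linarith [hv.2]) (by linarith [htL]))
        have hΦq : M ≤ s * Φ (u, v, t) := hsΦ _ hdist
        have hθ0 : 0 ≤ θ t := by
          apply mul_nonneg hlam0.le
          exact add_nonneg (mul_nonneg hu.1.le (sq_nonneg t)) (mul_nonneg (sq_nonneg v) ht0.le)
        have hθ1 : θ t ≤ 1 := by
          have hA : u * t ^ 2 ≤ b * L ^ 2 :=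
            mul_le_mul hu.2 (pow_le_pow_left₀ ht0.le htL 2) (sq_nonneg t) hb.le
          have hB : v ^ 2 * t ≤ V ^ 2 * L :=
            mul_le_mul (pow_le_pow_left₀ hv.1.le hv.2 2) htL ht0.le (sq_nonneg V)
          have hCC : b * L ^ 2 + V ^ 2 * L = 2 * b ^ 3 * x ^ 8 := by rw [hLdef, hVdef]; ring
          have hcube : b ^ 3 ≤ (1/2) ^ 3 := pow_le_pow_left₀ hb.le hb2 3
          calc θ t = lam * (u * t ^ 2 + v ^ 2 * t) := rfl
            _ ≤ lam * (2 * b ^ 3 * x ^ 8) := by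
                apply mul_le_mul_of_nonneg_left _ hlam0.le
                rw [← hCC]; linarith
            _ = 2 * b ^ 3 * (lam * x ^ 8) := by ring
            _ = 2 * b ^ 3 := by rw [hx8]; ring
            _ ≤ 1 := by norm_num at hcube ⊢; linarith
        have hcos : 1 / 2 ≤ Real.cos (θ t) := by
          have h := Real.one_sub_sq_div_two_le_cos (x := θ t)
          have h2 : θ t ^ 2 ≤ 1 := pow_le_one₀ hθ0 hθ1
          linarith
        have hre2 : ((s:ℂ) * F t).re = s * Φ (u, v, t) * a * Real.cos (θ t) := by
          have hphase : Complex.I * (↑lam * ((u:ℂ) * (t:ℂ) ^ 2 + (v:ℂ) ^ 2 * (t:ℂ)))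
              = ((θ t : ℝ) : ℂ) * Complex.I := by
            rw [hθdef]; push_cast; ring
          simp only [hFdef]
          rw [hphase]
          have hcollect : (s:ℂ) * (Complex.exp (((θ t : ℝ) : ℂ) * Complex.I) *
              (Φ (u, v, t) : ℂ) * (a:ℂ))
              = ((s * Φ (u, v, t) * a : ℝ) : ℂ) * Complex.exp (((θ t : ℝ) : ℂ) * Complex.I) := by
            push_cast; ring
          rw [hcollect, Complex.re_ofReal_mul, Complex.exp_ofReal_mul_I_re]
        rw [hre2]
        have h3 : M * (1/2) ≤ (s * Φ (u, v, t)) * Real.cos (θ t) :=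
          mul_le_mul hΦq hcos (by norm_num) (le_trans hM.le hΦq)
        calc M / 2 * a = M * (1/2) * a := by ring
          _ ≤ s * Φ (u, v, t) * Real.cos (θ t) * a := mul_le_mul_of_nonneg_right h3 ha.le
          _ = s * Φ (u, v, t) * a * Real.cos (θ t) := by ring
      have hintS : Integrable (fun t => (s:ℂ) * F t) (volume.restrict (Set.Ioc (0:ℝ) L)) :=
        hFint.const_mul _
      have hreInt : IntegrableOn (fun t => ((s:ℂ) * F t).re) (Set.Ioc (0:ℝ) L) volume := by
        simpa [IntegrableOn] using hintS.re
      have hre_eq : ∫ t in Set.Ioc (0:ℝ) L, ((s:ℂ) * F t).re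
          = ((s:ℂ) * ∫ t in Set.Ioc (0:ℝ) L, F t).re := by
        rw [← integral_const_mul]
        simpa using integral_re hintS
      have hconst : ∫ _t in Set.Ioc (0:ℝ) L, (M / 2 * a) = m := by
        rw [setIntegral_const]
        simp only [measureReal_def, Real.volume_Ioc, sub_zero, ENNReal.toReal_ofReal hL.le, smul_eq_mul, hmdef]
        ring
      have hstep : m ≤ ((s:ℂ) * ∫ t in Set.Ioc (0:ℝ) L, F t).re := by
        rw [← hre_eq, ← hconst]
        exact setIntegral_mono_on
          (integrableOn_const (by simp [Real.volume_Ioc]))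
          hreInt measurableSet_Ioc hre
      calc m ≤ ((s:ℂ) * ∫ t in Set.Ioc (0:ℝ) L, F t).re := hstep
        _ ≤ ‖(s:ℂ) * ∫ t in Set.Ioc (0:ℝ) L, F t‖ :=
            (Complex.re_le_norm _)
        _ = ‖∫ t in Set.Ioc (0:ℝ) L, F t‖ := by
            rw [norm_mul, Complex.norm_real, Real.norm_eq_abs, hs_abs, one_mul]
    have hmono : ∀ p : ℝ × ℝ, ‖(R.indicator fun _ => (m:ℂ)) p‖ ≤
        ‖∫ t : ℝ, Complex.exp (Complex.I * (↑lam * ((p.1:ℂ) * (t:ℂ) ^ 2 + (p.2:ℂ) ^ 2 * (t:ℂ)))) *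
          (Φ (p.1, p.2, t) : ℂ) * (Set.Ioc (0:ℝ) L).indicator (fun _ => (a:ℂ)) t‖ := by
      intro p
      by_cases hp : p ∈ R
      · rw [Set.indicator_of_mem hp]
        have h := hkey p.1 p.2 (by simpa using hp)
        calc ‖(m:ℂ)‖ = m := by rw [Complex.norm_real, Real.norm_eq_abs, abs_of_pos hm]
          _ ≤ _ := h
      · rw [Set.indicator_of_notMem hp]; simp
    have h1 := eLpNorm_mono (p := 2) (μ := (volume : Measure (ℝ × ℝ))) hmono
    rw [ge_iff_le]
    refine le_trans ?_ h1
    have hR : MeasurableSet R := measurableSet_Ioc.prod measurableSet_Ioc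
    rw [eLpNorm_indicator_const hR (by norm_num) (by norm_num)]
    have hvolR : volume R = ENNReal.ofReal (b * V) := by
      rw [hRdef, Measure.volume_eq_prod, Measure.prod_prod]
      simp [Real.volume_Ioc, ← ENNReal.ofReal_mul hb.le]
    have hnn : ‖(m:ℂ)‖ₑ = ENNReal.ofReal m := by
      rw [← ofReal_norm, Complex.norm_real, Real.norm_of_nonneg hm.le]
    have htp : 1 / (2:ENNReal).toReal = (1:ℝ)/2 := by norm_num
    rw [hvolR, hnn, htp, ENNReal.ofReal_rpow_of_pos (by positivity),
      ← ENNReal.ofReal_mul hm.le]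
    apply ENNReal.ofReal_le_ofReal
    apply le_of_eq
    have hbV : (b * V) ^ ((1:ℝ)/2) = y ^ 2 * x := by
      have h1 : b * V = (y ^ 2 * x) ^ (2:ℕ) := by rw [hVdef, ← hy2]; ring
      rw [h1, ← Real.rpow_natCast (y ^ 2 * x) 2, ← Real.rpow_mul (by positivity)]
      norm_num
    rw [h38, hy3, hmdef, haL, hbV]; ring
end

section
/- Let T_λ f(u,v) = ∫_ℝ exp(i·λ·(u·t² + v²·t))·Φ(u,v,t)·f(t) dt with Φ continuous, compactly supported, and Φ ≥ 1 on [-2,2]³. Then for all sufficiently large λ, there exists f_λ ∈ L²(ℝ), f_λ ≠ 0, such that ‖T_λ f_λ‖_{L²(ℝ²)} ≥ c·λ^(-3/8)·‖f_λ‖_{L²(ℝ)} for a constant c > 0 independent of λ. -/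
open MeasureTheory
open scoped ENNReal NNReal

set_option maxHeartbeats 1000000 in
theorem stmt_12 (Φ : ℝ × ℝ × ℝ → ℝ) (hΦcont : Continuous Φ)
    (hΦsupp : HasCompactSupport Φ)
    (hΦ1 : ∀ u v t : ℝ, u ∈ Set.Icc (-2 : ℝ) 2 → v ∈ Set.Icc (-2 : ℝ) 2 →
      t ∈ Set.Icc (-2 : ℝ) 2 → 1 ≤ Φ (u, v, t)) :
    ∃ c > 0, ∃ Λ : ℝ, ∀ lam : ℝ, Λ ≤ lam → ∃ f : ℝ → ℂ,
      MemLp f 2 (volume : Measure ℝ) ∧ eLpNorm f 2 volume ≠ 0 ∧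
      eLpNorm (fun p : ℝ × ℝ =>
          ∫ t : ℝ, Complex.exp (Complex.I * (lam * (p.1 * t ^ 2 + p.2 ^ 2 * t))) *
            (Φ (p.1, p.2, t) : ℂ) * f t) 2 volume ≥
        ENNReal.ofReal (c * lam ^ (-(3:ℝ)/8)) * eLpNorm f 2 volume := by
  refine ⟨1/8, by norm_num, 1, fun lam hlam => ?_⟩
  have hlam0 : (0:ℝ) < lam := lt_of_lt_of_le one_pos hlam
  set A : ℝ := lam ^ (-(1:ℝ)/2) with hA
  set B : ℝ := lam ^ (-(1:ℝ)/4) with hB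
  have hA0 : 0 < A := Real.rpow_pos_of_pos hlam0 _
  have hB0 : 0 < B := Real.rpow_pos_of_pos hlam0 _
  have hA1 : A ≤ 1 := Real.rpow_le_one_of_one_le_of_nonpos hlam (by norm_num)
  have hB1 : B ≤ 1 := Real.rpow_le_one_of_one_le_of_nonpos hlam (by norm_num)
  have hAB : A * B = lam ^ (-(3:ℝ)/4) := by
    rw [hA, hB, ← Real.rpow_add hlam0]; norm_num
  have hAinv : A * A = lam⁻¹ := by
    rw [hA, ← Real.rpow_add hlam0]
    norm_num [Real.rpow_neg_one]
  have hAA : lam * (A * A) = 1 := by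
    rw [hAinv, mul_inv_cancel₀ hlam0.ne']
  have hBB : B * B = A := by
    rw [hA, hB, ← Real.rpow_add hlam0]
    norm_num
  have hBBA : lam * (B * B * A) = 1 := by
    rw [hBB]; exact hAA
  have hP : (lam ^ (-(3:ℝ)/8)) * (lam ^ (-(3:ℝ)/8)) = lam ^ (-(3:ℝ)/4) := by
    rw [← Real.rpow_add hlam0]; norm_num
  clear_value A B
  set δ : ℝ := A / 2 with hδ
  set ρ : ℝ := B / 2 with hρ
  clear_value δ ρ
  have hδ0 : 0 < δ := by rw [hδ]; positivity
  have hρ0 : 0 < ρ := by rw [hρ]; positivity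
  have hδle : δ ≤ 1/2 := by rw [hδ]; linarith
  have hρle : ρ ≤ 1/2 := by rw [hρ]; linarith
  set f : ℝ → ℂ := (Set.Icc (0:ℝ) δ).indicator (fun _ => 1) with hf
  have hvolIcc : volume (Set.Icc (0:ℝ) δ) = ENNReal.ofReal δ := by
    rw [Real.volume_Icc]; norm_num
  have hfnorm : eLpNorm f 2 volume = (ENNReal.ofReal δ) ^ ((1:ℝ)/2) := by
    rw [hf, eLpNorm_indicator_const measurableSet_Icc two_ne_zero ENNReal.ofNat_ne_top]
    simp [hvolIcc]
  -- pointwise lower bound for the oscillatory integral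
  have key : ∀ u v : ℝ, u ∈ Set.Icc (0:ℝ) (1/2) → v ∈ Set.Icc (0:ℝ) ρ →
      δ/2 ≤ ‖∫ t : ℝ, Complex.exp (Complex.I * (lam * (u * t ^ 2 + v ^ 2 * t))) *
        (Φ (u, v, t) : ℂ) * f t‖ := by
    intro u v hu hv
    set g : ℝ → ℂ := fun t => Complex.exp (Complex.I * (lam * (u * t ^ 2 + v ^ 2 * t))) *
        (Φ (u, v, t) : ℂ) with hg
    have hgcont : Continuous g := by
      have hct : Continuous fun t : ℝ => (t : ℂ) := Complex.continuous_ofReal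
      apply Continuous.mul
      · exact Complex.continuous_exp.comp
          (continuous_const.mul (continuous_const.mul
            ((continuous_const.mul (hct.pow 2)).add (continuous_const.mul hct))))
      · exact Complex.continuous_ofReal.comp (hΦcont.comp
          (continuous_const.prodMk (continuous_const.prodMk continuous_id)))
    have hInt : IntegrableOn g (Set.Icc 0 δ) volume := hgcont.integrableOn_Icc
    have heq : (fun t : ℝ => Complex.exp (Complex.I * (lam * (u * t ^ 2 + v ^ 2 * t))) *
        (Φ (u, v, t) : ℂ) * f t) = (Set.Icc (0:ℝ) δ).indicator g := by
      funext t
      by_cases ht : t ∈ Set.Icc (0:ℝ) δ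
      · simp [hf, hg, Set.indicator_of_mem ht]
      · simp [hf, hg, Set.indicator_of_notMem ht]
    rw [heq, integral_indicator measurableSet_Icc]
    have hre : ∀ t ∈ Set.Icc (0:ℝ) δ, (1:ℝ)/2 ≤ (g t).re := by
      intro t ht
      obtain ⟨ht0, htδ⟩ := ht
      set θ : ℝ := lam * (u * t ^ 2 + v ^ 2 * t) with hθ
      have hgt : g t = Complex.exp ((θ:ℂ) * Complex.I) * (Φ (u, v, t) : ℂ) := by
        rw [hg, hθ]; push_cast; ring_nf
      have hθ0 : 0 ≤ θ := by
        have h1 := hu.1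
        have h2 := hv.1
        have : 0 ≤ u * t ^ 2 + v ^ 2 * t := by positivity
        positivity
      have hθle : θ ≤ 1/4 := by
        have h1 : u * t ^ 2 ≤ (1/2) * (δ * δ) := by
          have ht2 : t ^ 2 ≤ δ * δ := by nlinarith
          nlinarith [hu.2, sq_nonneg t, hu.1]
        have h2 : v ^ 2 * t ≤ ρ * ρ * δ := by
          have hv2 : v ^ 2 ≤ ρ * ρ := by nlinarith [hv.1, hv.2]
          nlinarith [hv2, sq_nonneg v, hρ0.le]
        have hle : θ ≤ lam * ((1/2) * (δ * δ) + ρ * ρ * δ) := by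
          apply mul_le_mul_of_nonneg_left _ hlam0.le
          linarith
        have hcalc : lam * ((1/2) * (δ * δ) + ρ * ρ * δ) = 1/4 := by
          have e1 : (1:ℝ)/2 * (δ * δ) = (A * A) / 8 := by rw [hδ]; ring
          have e2 : ρ * ρ * δ = (B * B * A) / 8 := by rw [hρ, hδ]; ring
          rw [e1, e2, mul_add]
          rw [show lam * (A * A / 8) = lam * (A * A) / 8 by ring, hAA]
          rw [show lam * (B * B * A / 8) = lam * (B * B * A) / 8 by ring, hBBA]
          ring
        rw [hcalc] at hle
        linarith
      have hcos : (1:ℝ)/2 ≤ Real.cos θ := by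
        have hpi : θ ≤ Real.pi / 3 := by
          have := Real.pi_gt_three
          linarith
        have := Real.cos_le_cos_of_nonneg_of_le_pi hθ0
          (by linarith [Real.pi_pos] : Real.pi / 3 ≤ Real.pi) hpi
        rwa [Real.cos_pi_div_three] at this
      have hΦge : 1 ≤ Φ (u, v, t) :=
        hΦ1 u v t ⟨by linarith [hu.1], by linarith [hu.2]⟩
          ⟨by linarith [hv.1], by linarith [hv.2]⟩
          ⟨by linarith, by linarith⟩
      have hrecalc : (g t).re = Real.cos θ * Φ (u, v, t) := by
        rw [hgt]
        simp [Complex.mul_re, Complex.exp_ofReal_mul_I_re]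
      rw [hrecalc]
      nlinarith
    have hintre : δ/2 ≤ (∫ t in Set.Icc (0:ℝ) δ, g t).re := by
      rw [← RCLike.re_eq_complex_re, ← integral_re hInt, RCLike.re_eq_complex_re]
      have hmono : ∫ t in Set.Icc (0:ℝ) δ, (1:ℝ)/2 ≤ ∫ t in Set.Icc (0:ℝ) δ, (g t).re :=
        setIntegral_mono_on
          (integrableOn_const (by rw [hvolIcc]; exact ENNReal.ofReal_ne_top))
          hInt.re measurableSet_Icc hre
      rw [setIntegral_const, Measure.real, hvolIcc, ENNReal.toReal_ofReal hδ0.le, smul_eq_mul] at hmono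
      linarith
    calc δ/2 ≤ (∫ t in Set.Icc (0:ℝ) δ, g t).re := hintre
      _ ≤ ‖∫ t in Set.Icc (0:ℝ) δ, g t‖ := Complex.re_le_norm _
  -- put it together
  refine ⟨f, ?_, ?_, ?_⟩
  · exact memLp_indicator_const 2 measurableSet_Icc 1
      (Or.inr (by rw [hvolIcc]; exact ENNReal.ofReal_ne_top))
  · rw [hfnorm]
    simp [ENNReal.rpow_eq_zero_iff, hδ0, hδ0.le]
  · set S2 : Set (ℝ × ℝ) := Set.Icc (0:ℝ) (1/2) ×ˢ Set.Icc (0:ℝ) ρ with hS2def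
    have hS2 : MeasurableSet S2 := measurableSet_Icc.prod measurableSet_Icc
    have hvolS2 : volume S2 = ENNReal.ofReal (1/2) * ENNReal.ofReal ρ := by
      rw [hS2def, Measure.volume_eq_prod, Measure.prod_prod, Real.volume_Icc, Real.volume_Icc]
      norm_num
    set T : ℝ × ℝ → ℂ := fun p : ℝ × ℝ =>
      ∫ t : ℝ, Complex.exp (Complex.I * (lam * (p.1 * t ^ 2 + p.2 ^ 2 * t))) *
        (Φ (p.1, p.2, t) : ℂ) * f t with hT
    have hlow : ∀ p : ℝ × ℝ,
        S2.indicator (fun _ => ENNReal.ofReal ((δ/2)^2)) p ≤ (‖T p‖₊ : ℝ≥0∞) ^ (2:ℝ) := by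
      intro p
      by_cases hp : p ∈ S2
      · rw [Set.indicator_of_mem hp]
        have hk := key p.1 p.2 hp.1 hp.2
        have h1 : ENNReal.ofReal (δ/2) ≤ (‖T p‖₊ : ℝ≥0∞) := by
          rw [← enorm_eq_nnnorm, ← ofReal_norm]
          exact ENNReal.ofReal_le_ofReal hk
        calc ENNReal.ofReal ((δ/2)^2) = (ENNReal.ofReal (δ/2)) ^ (2:ℝ) := by
              rw [ENNReal.ofReal_rpow_of_nonneg (by positivity) (by norm_num)]
              norm_num
          _ ≤ (‖T p‖₊ : ℝ≥0∞) ^ (2:ℝ) := ENNReal.rpow_le_rpow h1 (by norm_num)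
      · rw [Set.indicator_of_notMem hp]
        exact zero_le
    have hlint : ENNReal.ofReal ((δ/2)^2 * (1/2 * ρ)) ≤
        ∫⁻ p : ℝ × ℝ, (‖T p‖₊ : ℝ≥0∞) ^ (2:ℝ) := by
      have h1 : (∫⁻ p : ℝ × ℝ, S2.indicator (fun _ => ENNReal.ofReal ((δ/2)^2)) p) ≤
          ∫⁻ p : ℝ × ℝ, (‖T p‖₊ : ℝ≥0∞) ^ (2:ℝ) := lintegral_mono hlow
      rw [lintegral_indicator_const hS2, hvolS2] at h1
      refine le_trans (le_of_eq ?_) h1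
      rw [← ENNReal.ofReal_mul (by norm_num), ENNReal.ofReal_mul (by positivity)]
    have hsq : ∀ x : ℝ, 0 ≤ x → (ENNReal.ofReal (x^2)) ^ ((1:ℝ)/2) = ENNReal.ofReal x := by
      intro x hx
      rw [ENNReal.ofReal_rpow_of_nonneg (by positivity) (by norm_num)]
      congr 1
      rw [← Real.rpow_natCast x 2, ← Real.rpow_mul hx]
      norm_num
    have hreal : (1/8 * lam ^ (-(3:ℝ)/8))^2 * δ ≤ (δ/2)^2 * (1/2 * ρ) := by
      have h1 : (lam ^ (-(3:ℝ)/8))^2 = A * B := by rw [sq, hP, ← hAB]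
      rw [mul_pow, h1, hδ, hρ]
      nlinarith [mul_nonneg (mul_nonneg hA0.le hA0.le) hB0.le]
    have hfin : ENNReal.ofReal (1/8 * lam ^ (-(3:ℝ)/8)) * (ENNReal.ofReal δ) ^ ((1:ℝ)/2) ≤
        (∫⁻ p : ℝ × ℝ, (‖T p‖₊ : ℝ≥0∞) ^ (2:ℝ)) ^ ((1:ℝ)/2) := by
      have hx0 : (0:ℝ) ≤ 1/8 * lam ^ (-(3:ℝ)/8) := by positivity
      calc ENNReal.ofReal (1/8 * lam ^ (-(3:ℝ)/8)) * (ENNReal.ofReal δ) ^ ((1:ℝ)/2)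
          = (ENNReal.ofReal ((1/8 * lam ^ (-(3:ℝ)/8))^2)) ^ ((1:ℝ)/2) *
            (ENNReal.ofReal δ) ^ ((1:ℝ)/2) := by rw [hsq _ hx0]
        _ = (ENNReal.ofReal ((1/8 * lam ^ (-(3:ℝ)/8))^2) * ENNReal.ofReal δ) ^ ((1:ℝ)/2) := by
            rw [ENNReal.mul_rpow_of_nonneg _ _ (by norm_num)]
        _ = (ENNReal.ofReal ((1/8 * lam ^ (-(3:ℝ)/8))^2 * δ)) ^ ((1:ℝ)/2) := by
            rw [ENNReal.ofReal_mul (by positivity)]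
        _ ≤ (ENNReal.ofReal ((δ/2)^2 * (1/2 * ρ))) ^ ((1:ℝ)/2) :=
            ENNReal.rpow_le_rpow (ENNReal.ofReal_le_ofReal hreal) (by norm_num)
        _ ≤ (∫⁻ p : ℝ × ℝ, (‖T p‖₊ : ℝ≥0∞) ^ (2:ℝ)) ^ ((1:ℝ)/2) :=
            ENNReal.rpow_le_rpow hlint (by norm_num)
    rw [ge_iff_le, hfnorm,
      eLpNorm_eq_lintegral_rpow_enorm_toReal two_ne_zero ENNReal.ofNat_ne_top]
    simpa [enorm_eq_nnnorm] using hfin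
end

section
/- There is no constant C and no exponent α > 3/8 such that the operator T_λ f(u,v) = ∫_ℝ exp(i·λ·(u·t² + v²·t))·Φ(u,v,t)·f(t) dt, with Φ continuous compactly supported and Φ(0,0,0) ≠ 0, satisfies ‖T_λ f‖_{L²(ℝ²)} ≤ C·λ^(-α)·‖f‖_{L²(ℝ)} for all λ ≥ 1 and all f ∈ L²(ℝ). -/
open MeasureTheory
open scoped ENNReal NNReal

set_option maxHeartbeats 800000 in
private lemma key_lemma (Φ : ℝ × ℝ × ℝ → ℝ) (hΦcont : Continuous Φ) (m δ : ℝ)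
    (hm : 0 < m) (hδ0 : 0 < δ) (hδ1 : δ ≤ 1/2)
    (hΦ : ∀ u v t : ℝ, |u| ≤ δ → |v| ≤ δ → |t| ≤ δ → m ≤ Φ (u, v, t))
    (C α : ℝ) (hα : α > 3/8)
    (H : ∀ lam : ℝ, 1 ≤ lam → ∀ f : ℝ → ℂ, MemLp f 2 (volume : Measure ℝ) →
      eLpNorm (fun p : ℝ × ℝ =>
          ∫ t : ℝ, Complex.exp (Complex.I * (lam * (p.1 * t ^ 2 + p.2 ^ 2 * t))) *
            (Φ (p.1, p.2, t) : ℂ) * f t) 2 volume ≤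
        ENNReal.ofReal (C * lam ^ (-α)) * eLpNorm f 2 volume) : False := by
  set β : ℝ := α - 3/8 with hβdef
  have hβ : 0 < β := by rw [hβdef]; linarith only [hα]
  set K : ℝ := C * Real.sqrt (2*δ) / (2*m*δ^2) with hKdef
  set B : ℝ := max 1 (K+1) with hBdef
  have hB1 : (1:ℝ) ≤ B := le_max_left _ _
  have hB0 : (0:ℝ) ≤ B := le_trans zero_le_one hB1
  set lam : ℝ := B ^ (β⁻¹ : ℝ) with hlamdef
  have hlam1 : (1:ℝ) ≤ lam := Real.one_le_rpow hB1 (by positivity)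
  have hlam0 : (0:ℝ) < lam := lt_of_lt_of_le one_pos hlam1
  have hlamβ : lam ^ β = B := by
    rw [hlamdef, ← Real.rpow_mul hB0, inv_mul_cancel₀ hβ.ne', Real.rpow_one]
  -- abbreviations for powers of lam
  set a : ℝ := lam ^ (-(1/2) : ℝ) with hadef
  set b : ℝ := lam ^ (-(1/4) : ℝ) with hbdef
  set c : ℝ := lam ^ (-(1/8) : ℝ) with hcdef
  have ha0 : 0 < a := Real.rpow_pos_of_pos hlam0 _
  have hb0 : 0 < b := Real.rpow_pos_of_pos hlam0 _
  have hc0 : 0 < c := Real.rpow_pos_of_pos hlam0 _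
  have ha1 : a ≤ 1 := Real.rpow_le_one_of_one_le_of_nonpos hlam1 (by norm_num)
  have hb1 : b ≤ 1 := Real.rpow_le_one_of_one_le_of_nonpos hlam1 (by norm_num)
  have haa : a * a = lam⁻¹ := by
    rw [hadef, ← Real.rpow_add hlam0]; norm_num [Real.rpow_neg_one]
  have hbb : b * b = a := by
    rw [hadef, hbdef, ← Real.rpow_add hlam0]; norm_num
  have hcc : c * c = b := by
    rw [hbdef, hcdef, ← Real.rpow_add hlam0]; norm_num
  -- test function
  set r : ℝ := δ * a with hrdef
  have hr0 : 0 < r := by positivity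
  have hrδ : r ≤ δ := by
    calc δ * a ≤ δ * 1 := mul_le_mul_of_nonneg_left ha1 hδ0.le
    _ = δ := mul_one δ
  set sv : ℝ := δ * b with hsvdef
  have hsv0 : 0 < sv := by positivity
  have hsvδ : sv ≤ δ := by
    calc δ * b ≤ δ * 1 := mul_le_mul_of_nonneg_left hb1 hδ0.le
    _ = δ := mul_one δ
  set f : ℝ → ℂ := (Set.Icc (-r) r).indicator (fun _ => (1:ℂ)) with hfdef
  have hf : MemLp f 2 (volume : Measure ℝ) :=
    memLp_indicator_const 2 measurableSet_Icc 1
      (Or.inr (by rw [Real.volume_Icc]; exact ENNReal.ofReal_ne_top))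
  set g : ℝ × ℝ → ℂ := fun p =>
      ∫ t : ℝ, Complex.exp (Complex.I * (lam * (p.1 * t ^ 2 + p.2 ^ 2 * t))) *
        (Φ (p.1, p.2, t) : ℂ) * f t with hgdef
  set S : Set (ℝ × ℝ) := Set.Icc (-δ) δ ×ˢ Set.Icc (-sv) sv with hSdef
  have hS : MeasurableSet S := measurableSet_Icc.prod measurableSet_Icc
  -- pointwise lower bound on g over S
  have hlow : ∀ p : ℝ × ℝ, p ∈ S → m * r ≤ ‖g p‖ := by
    rintro ⟨u, v⟩ hp
    obtain ⟨hu, hv⟩ := hp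
    have hu' : |u| ≤ δ := abs_le.mpr ⟨by simpa using hu.1, hu.2⟩
    have hv' : |v| ≤ sv := abs_le.mpr ⟨by simpa using hv.1, hv.2⟩
    have hvδ : |v| ≤ δ := hv'.trans hsvδ
    -- rewrite g as an integral over Icc
    have hgp : g (u, v) = ∫ t in Set.Icc (-r) r,
        Complex.exp (Complex.I * (lam * (u * t ^ 2 + v ^ 2 * t))) * (Φ (u, v, t) : ℂ) := by
      rw [hgdef]
      simp only
      rw [← integral_indicator measurableSet_Icc]
      congr 1
      funext t
      by_cases ht : t ∈ Set.Icc (-r) r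
      · simp [hfdef, Set.indicator_of_mem ht]
      · simp [hfdef, Set.indicator_of_notMem ht]
    -- real part of integrand
    have hre : ∀ t : ℝ,
        (Complex.exp (Complex.I * (lam * (u * t ^ 2 + v ^ 2 * t))) * (Φ (u, v, t) : ℂ)).re
          = Real.cos (lam * (u * t ^ 2 + v ^ 2 * t)) * Φ (u, v, t) := by
      intro t
      have h1 : (Complex.I * ((lam : ℂ) * ((u:ℂ) * (t:ℂ) ^ 2 + (v:ℂ) ^ 2 * (t:ℂ))))
          = ((lam * (u * t ^ 2 + v ^ 2 * t) : ℝ) : ℂ) * Complex.I := by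
        push_cast; ring
      rw [h1, Complex.mul_re, Complex.exp_ofReal_mul_I_re, Complex.ofReal_re,
        Complex.ofReal_im, mul_zero, sub_zero]
    -- continuity of integrand
    have ctriple : Continuous fun t : ℝ => ((u, v, t) : ℝ × ℝ × ℝ) :=
      continuous_const.prodMk (continuous_const.prodMk continuous_id)
    have cphaseC : Continuous fun t : ℝ =>
        Complex.I * ((lam : ℂ) * ((u:ℂ) * (t:ℂ) ^ 2 + (v:ℂ) ^ 2 * (t:ℂ))) :=
      continuous_const.mul (continuous_const.mul
        (((continuous_const.mul (Complex.continuous_ofReal.pow 2)).add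
          (continuous_const.mul Complex.continuous_ofReal))))
    have cphaseR : Continuous fun t : ℝ => lam * (u * t ^ 2 + v ^ 2 * t) :=
      continuous_const.mul (((continuous_const.mul ((continuous_id.pow 2))).add
        (continuous_const.mul continuous_id)))
    have ccont : Continuous fun t : ℝ =>
        Complex.exp (Complex.I * (lam * (u * t ^ 2 + v ^ 2 * t))) * (Φ (u, v, t) : ℂ) :=
      (Complex.continuous_exp.comp cphaseC).mul
        (Complex.continuous_ofReal.comp (hΦcont.comp ctriple))
    have hcont2 : Continuous fun t : ℝ =>
        Real.cos (lam * (u * t ^ 2 + v ^ 2 * t)) * Φ (u, v, t) :=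
      (Real.continuous_cos.comp cphaseR).mul (hΦcont.comp ctriple)
    -- lower bound of the real integrand
    have hbound : ∀ t ∈ Set.Icc (-r) r,
        m / 2 ≤ Real.cos (lam * (u * t ^ 2 + v ^ 2 * t)) * Φ (u, v, t) := by
      intro t ht
      have hta : |t| ≤ r := abs_le.mpr ⟨by simpa using ht.1, ht.2⟩
      have htδ : |t| ≤ δ := hta.trans hrδ
      have hΦt : m ≤ Φ (u, v, t) := hΦ u v t hu' hvδ htδ
      have ht2 : t ^ 2 ≤ r ^ 2 := by
        rw [← sq_abs t]; exact pow_le_pow_left₀ (abs_nonneg t) hta 2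
      have hv2 : v ^ 2 ≤ sv ^ 2 := by
        rw [← sq_abs v]; exact pow_le_pow_left₀ (abs_nonneg v) hv' 2
      have hδ3 : 2 * δ^3 ≤ 1/4 := by
        have h8 : δ^3 ≤ (1/2)^3 := pow_le_pow_left₀ hδ0.le hδ1 3
        norm_num at h8
        linarith only [h8]
      -- |phase| ≤ 2 δ³ ≤ 1/4
      have hphase : |lam * (u * t ^ 2 + v ^ 2 * t)| ≤ 2 * δ^3 := by
        have h1 : |u * t ^ 2 + v ^ 2 * t| ≤ |u| * t ^ 2 + v ^ 2 * |t| := by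
          calc |u * t ^ 2 + v ^ 2 * t| ≤ |u * t ^ 2| + |v ^ 2 * t| := abs_add_le _ _
          _ = |u| * t ^ 2 + v ^ 2 * |t| := by
              rw [abs_mul, abs_mul, abs_pow, sq_abs, abs_pow, sq_abs]
        have hr2 : r ^ 2 = δ ^ 2 * lam⁻¹ := by
          rw [hrdef, mul_pow, pow_two a, haa]
        have hsv2r : sv ^ 2 * r = δ ^ 3 * lam⁻¹ := by
          have hsv2 : sv ^ 2 = δ ^ 2 * a := by rw [hsvdef, mul_pow, pow_two b, hbb]
          rw [hsv2, hrdef, show δ ^ 2 * a * (δ * a) = δ ^ 3 * (a * a) from by ring, haa]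
        have h2 : |u| * t ^ 2 + v ^ 2 * |t| ≤ 2 * δ^3 * lam⁻¹ := by
          have hq1 : |u| * t ^ 2 ≤ δ * (δ ^ 2 * lam⁻¹) := by
            rw [← hr2]
            exact mul_le_mul hu' ht2 (sq_nonneg t) hδ0.le
          have hq2 : v ^ 2 * |t| ≤ sv ^ 2 * r := by
            exact mul_le_mul hv2 hta (abs_nonneg t) (sq_nonneg sv)
          rw [hsv2r] at hq2
          have hq3 : δ * (δ ^ 2 * lam⁻¹) = δ ^ 3 * lam⁻¹ := by ring
          rw [hq3] at hq1
          linarith only [hq1, hq2]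
        calc |lam * (u * t ^ 2 + v ^ 2 * t)| = lam * |u * t ^ 2 + v ^ 2 * t| := by
              rw [abs_mul, abs_of_pos hlam0]
        _ ≤ lam * (2 * δ^3 * lam⁻¹) := by
              apply mul_le_mul_of_nonneg_left (le_trans h1 h2) hlam0.le
        _ = 2 * δ^3 := by field_simp
      have hphase1 : |lam * (u * t ^ 2 + v ^ 2 * t)| ≤ 1 := by linarith only [hphase, hδ3]
      have hcos : (1:ℝ)/2 ≤ Real.cos (lam * (u * t ^ 2 + v ^ 2 * t)) := by
        have h1 := Real.one_sub_sq_div_two_le_cos (x := lam * (u * t ^ 2 + v ^ 2 * t))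
        have h2 : (lam * (u * t ^ 2 + v ^ 2 * t)) ^ 2 ≤ 1 := by
          rw [← sq_abs]
          exact pow_le_one₀ (abs_nonneg _) hphase1
        linarith only [h1, h2]
      have hcosnn : (0:ℝ) ≤ Real.cos (lam * (u * t ^ 2 + v ^ 2 * t)) := by linarith only [hcos]
      calc m / 2 = (1/2) * m := by ring
      _ ≤ Real.cos (lam * (u * t ^ 2 + v ^ 2 * t)) * Φ (u, v, t) :=
          mul_le_mul hcos hΦt hm.le hcosnn
    -- integral lower bound
    have hIcc : (volume (Set.Icc (-r) r)).toReal = 2 * r := by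
      rw [Real.volume_Icc, ENNReal.toReal_ofReal (by linarith)]; ring
    have hint : m * r ≤ ∫ t in Set.Icc (-r) r,
        Real.cos (lam * (u * t ^ 2 + v ^ 2 * t)) * Φ (u, v, t) := by
      have := setIntegral_ge_of_const_le (μ := volume) measurableSet_Icc
        (by rw [Real.volume_Icc]; exact ENNReal.ofReal_ne_top) hbound
        (hcont2.integrableOn_Icc)
      rw [measureReal_def, hIcc, smul_eq_mul] at this
      linarith only [this]
    have hre2 : (g (u, v)).re = ∫ t in Set.Icc (-r) r,
        Real.cos (lam * (u * t ^ 2 + v ^ 2 * t)) * Φ (u, v, t) := by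
      rw [hgp]
      have hint' : IntegrableOn (fun t : ℝ =>
          Complex.exp (Complex.I * (lam * (u * t ^ 2 + v ^ 2 * t))) * (Φ (u, v, t) : ℂ))
          (Set.Icc (-r) r) volume := ccont.integrableOn_Icc
      have hreq : Complex.re = RCLike.re := rfl
      rw [hreq, ← integral_re (μ := volume.restrict (Set.Icc (-r) r)) hint']
      apply setIntegral_congr_fun measurableSet_Icc
      intro t _
      have h5 := hre t
      rw [hreq] at h5
      exact h5
    calc m * r ≤ (g (u, v)).re := by rw [hre2]; exact hint
    _ ≤ ‖g (u, v)‖ := Complex.re_le_norm _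
    _ = ‖g (u, v)‖ := rfl
  -- volume of S
  have hvolS : volume S = ENNReal.ofReal (2*δ) * ENNReal.ofReal (2*sv) := by
    rw [hSdef, MeasureTheory.Measure.volume_eq_prod, Measure.prod_prod, Real.volume_Icc, Real.volume_Icc,
      show δ - -δ = 2*δ from by ring, show sv - -sv = 2*sv from by ring]
  -- lower bound on eLpNorm of g
  have h1 : ENNReal.ofReal (m * r) * volume S ^ ((1:ℝ)/2) ≤ eLpNorm g 2 volume := by
    have hmono : eLpNorm (S.indicator fun _ => ((m*r : ℝ) : ℂ)) 2 volume ≤ eLpNorm g 2 volume := by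
      apply eLpNorm_mono
      intro x
      by_cases hx : x ∈ S
      · rw [Set.indicator_of_mem hx]
        calc ‖((m*r : ℝ) : ℂ)‖ = |m * r| := (Complex.norm_real _).trans (Real.norm_eq_abs _)
        _ = m * r := abs_of_pos (by positivity)
        _ ≤ ‖g x‖ := hlow x hx
      · rw [Set.indicator_of_notMem hx]; simp
    rw [eLpNorm_indicator_const hS (by norm_num) (by norm_num)] at hmono
    have hnn : ‖((m*r : ℝ) : ℂ)‖ₑ = ENNReal.ofReal (m*r) := by
      rw [← ofReal_norm, Complex.norm_real, Real.norm_eq_abs,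
        abs_of_pos (by positivity : (0:ℝ) < m * r)]
    have hexp : 1 / (2:ℝ≥0∞).toReal = (1:ℝ)/2 := by norm_num
    rw [hnn, hexp] at hmono
    exact hmono
  have h2 := H lam hlam1 f hf
  -- eLpNorm of f
  have hfnorm : eLpNorm f 2 (volume : Measure ℝ) = ENNReal.ofReal (2*r) ^ ((1:ℝ)/2) := by
    rw [hfdef, eLpNorm_indicator_const measurableSet_Icc (by norm_num) (by norm_num),
      Real.volume_Icc, show r - -r = 2*r from by ring,
      show 1 / (2:ℝ≥0∞).toReal = (1:ℝ)/2 from by norm_num]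
    simp
  rw [hfnorm] at h2
  have h3 : ENNReal.ofReal (m * r) * volume S ^ ((1:ℝ)/2) ≤
      ENNReal.ofReal (C * lam ^ (-α)) * ENNReal.ofReal (2*r) ^ ((1:ℝ)/2) := le_trans h1 h2
  -- convert to a real inequality
  have hvs : volume S ^ ((1:ℝ)/2) = ENNReal.ofReal ((2*δ*(2*sv)) ^ ((1:ℝ)/2)) := by
    rw [hvolS, ← ENNReal.ofReal_mul (by positivity), ENNReal.ofReal_rpow_of_pos (by positivity)]
  have hrs : ENNReal.ofReal (2*r) ^ ((1:ℝ)/2) = ENNReal.ofReal ((2*r) ^ ((1:ℝ)/2)) := by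
    rw [ENNReal.ofReal_rpow_of_pos (by positivity)]
  rw [hvs, hrs, ← ENNReal.ofReal_mul (by positivity : (0:ℝ) ≤ m * r),
    ← ENNReal.ofReal_mul' (by positivity : (0:ℝ) ≤ (2*r) ^ ((1:ℝ)/2))] at h3
  have h4 : m * r * (2*δ*(2*sv)) ^ ((1:ℝ)/2) ≤ C * lam ^ (-α) * (2*r) ^ ((1:ℝ)/2) := by
    rcases ENNReal.ofReal_le_ofReal_iff'.mp h3 with h | h
    · exact h
    · exfalso
      have hpos0 : (0:ℝ) < m * r * (2*δ*(2*sv)) ^ ((1:ℝ)/2) := by positivity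
      linarith only [h, hpos0]
  -- simplify the square roots
  have hsq : ∀ x : ℝ, 0 ≤ x → (x^2 : ℝ) ^ ((1:ℝ)/2) = x := by
    intro x hx
    rw [← Real.rpow_natCast x 2, ← Real.rpow_mul hx]
    norm_num
  have hLs : (2*δ*(2*sv)) ^ ((1:ℝ)/2) = 2*δ*c := by
    have : 2*δ*(2*sv) = (2*δ*c)^2 := by
      rw [hsvdef, ← hcc]; ring
    rw [this, hsq _ (by positivity)]
  have hRs : (2*r) ^ ((1:ℝ)/2) = Real.sqrt (2*δ) * b := by
    have : 2*r = (Real.sqrt (2*δ) * b)^2 := by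
      rw [hrdef, mul_pow, Real.sq_sqrt (by positivity), sq b, hbb]
      ring
    rw [this, hsq _ (by positivity)]
  rw [hLs, hRs, hrdef] at h4
  -- h4 : m * (δ * a) * (2*δ*c) ≤ C * lam ^ (-α) * (Real.sqrt (2*δ) * b)
  have hpow : (0:ℝ) < lam ^ (α + 1/4) := Real.rpow_pos_of_pos hlam0 _
  have h5 := mul_le_mul_of_nonneg_right h4 hpow.le
  have hac : a * c * lam ^ (α + 1/4) = B := by
    rw [hadef, hcdef, ← Real.rpow_add hlam0, ← Real.rpow_add hlam0, ← hlamβ]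
    congr 1
    rw [hβdef]; ring
  have hb3 : lam ^ (-α) * b * lam ^ (α + 1/4) = 1 := by
    rw [hbdef, ← Real.rpow_add hlam0, ← Real.rpow_add hlam0,
      show -α + -(1/4) + (α + 1/4) = 0 from by ring, Real.rpow_zero]
  have h6 : 2*m*δ^2 * B ≤ C * Real.sqrt (2*δ) := by
    calc 2*m*δ^2 * B = m * (δ * a) * (2*δ*c) * lam ^ (α + 1/4) := by
          rw [← hac]; ring
    _ ≤ C * lam ^ (-α) * (Real.sqrt (2*δ) * b) * lam ^ (α + 1/4) := h5
    _ = C * Real.sqrt (2*δ) * (lam ^ (-α) * b * lam ^ (α + 1/4)) := by ring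
    _ = C * Real.sqrt (2*δ) := by rw [hb3]; ring
  have hBK : B ≤ K := by
    rw [hKdef]
    rw [le_div_iff₀ (by positivity)]
    linarith only [h6]
  have hKB : K + 1 ≤ B := le_max_right _ _
  linarith only [hBK, hKB]

theorem stmt_14 (Φ : ℝ × ℝ × ℝ → ℝ) (hΦcont : Continuous Φ)
    (hΦsupp : HasCompactSupport Φ) (hΦ0 : Φ (0, 0, 0) ≠ 0) :
    ¬ ∃ C : ℝ, ∃ α : ℝ, α > 3/8 ∧ ∀ lam : ℝ, 1 ≤ lam → ∀ f : ℝ → ℂ,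
      MemLp f 2 (volume : Measure ℝ) →
      eLpNorm (fun p : ℝ × ℝ =>
          ∫ t : ℝ, Complex.exp (Complex.I * (lam * (p.1 * t ^ 2 + p.2 ^ 2 * t))) *
            (Φ (p.1, p.2, t) : ℂ) * f t) 2 volume ≤
        ENNReal.ofReal (C * lam ^ (-α)) * eLpNorm f 2 volume := by
  rintro ⟨C, α, hα, H⟩
  -- reduce to the case Φ (0,0,0) > 0 by possibly negating Φ
  obtain ⟨Ψ, hΨcont, hΨ0, hΨH⟩ :
      ∃ Ψ : ℝ × ℝ × ℝ → ℝ, Continuous Ψ ∧ 0 < Ψ (0, 0, 0) ∧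
        ∀ lam : ℝ, 1 ≤ lam → ∀ f : ℝ → ℂ, MemLp f 2 (volume : Measure ℝ) →
          eLpNorm (fun p : ℝ × ℝ =>
              ∫ t : ℝ, Complex.exp (Complex.I * (lam * (p.1 * t ^ 2 + p.2 ^ 2 * t))) *
                (Ψ (p.1, p.2, t) : ℂ) * f t) 2 volume ≤
            ENNReal.ofReal (C * lam ^ (-α)) * eLpNorm f 2 volume := by
    rcases lt_or_gt_of_ne hΦ0 with hneg | hpos
    · refine ⟨fun x => -Φ x, hΦcont.neg, by simpa using hneg, ?_⟩
      intro lam hlam f hf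
      have heq : (fun p : ℝ × ℝ =>
          ∫ t : ℝ, Complex.exp (Complex.I * (lam * (p.1 * t ^ 2 + p.2 ^ 2 * t))) *
            ((-Φ (p.1, p.2, t) : ℝ) : ℂ) * f t)
          = -(fun p : ℝ × ℝ =>
          ∫ t : ℝ, Complex.exp (Complex.I * (lam * (p.1 * t ^ 2 + p.2 ^ 2 * t))) *
            ((Φ (p.1, p.2, t) : ℝ) : ℂ) * f t) := by
        funext p
        simp only [Pi.neg_apply]
        rw [← integral_neg]
        congr 1
        funext t
        push_cast
        ring
      rw [heq, eLpNorm_neg]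
      exact H lam hlam f hf
    · exact ⟨Φ, hΦcont, hpos, H⟩
  set m : ℝ := Ψ (0, 0, 0) / 2 with hmdef
  have hm : 0 < m := half_pos hΨ0
  obtain ⟨δ₀, hδ₀pos, hball⟩ := Metric.continuousAt_iff.mp hΨcont.continuousAt m hm
  set δ : ℝ := min (δ₀/2) (1/2) with hδdef
  have hδ0 : 0 < δ := lt_min (half_pos hδ₀pos) (by norm_num)
  have hδ1 : δ ≤ 1/2 := min_le_right _ _
  have hΦb : ∀ u v t : ℝ, |u| ≤ δ → |v| ≤ δ → |t| ≤ δ → m ≤ Ψ (u, v, t) := by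
    intro u v t hu hv ht
    have hδδ₀ : δ < δ₀ := lt_of_le_of_lt (min_le_left _ _) (half_lt_self hδ₀pos)
    have hdist : dist ((u, v, t) : ℝ × ℝ × ℝ) (0, 0, 0) < δ₀ := by
      rw [Prod.dist_eq, Prod.dist_eq]
      simp only [Real.dist_eq, sub_zero]
      exact lt_of_le_of_lt (max_le hu (max_le hv ht)) hδδ₀
    have := hball hdist
    rw [Real.dist_eq] at this
    have habs := abs_lt.mp this
    linarith only [habs.1, hmdef]
  exact key_lemma Ψ hΨcont m δ hm hδ0 hδ1 hΦb C α hα hΨH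
end
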